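/- arXiv:1409.5401 — 5 statements merged into one kernel-verified Lean document; each statement's English description precedes it below -/
import Mathlib

section
/- Under the failed-link setup (link ε̄ = (ν_j, ν_i) fails at time t_f, only row i of A is perturbed to Ā with ā_{ij} = 0), for every k ≤ dist(G; ν_j, ν_p) the jump of the k-th derivative of the output of node ν_p satisfies: Δ_{t_f}(p,k) = c_{i,j,p} if k = dist(G; ν_i, ν_p) + 1, and Δ_{t_f}(p,k) = 0 if k < dist(G; ν_i, ν_p) + 1, where c_{i,j,p} = Φ(Ω^{k−1}(G; ν_i, ν_p), A) · Σ_{q=1}^{n} (ā_{iq} − a_{iq}) x_q(t_f). -/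
open Finset

/-- The finite set of walks of length `k` from `q` to `p` in the digraph on `Fin n`
with edge set `E`, encoded as vertex sequences `f : Fin (k+1) → Fin n`. -/
def walks (n : ℕ) (E : Finset (Fin n × Fin n)) (k : ℕ) (q p : Fin n) :
    Finset (Fin (k + 1) → Fin n) :=
  Finset.univ.filter fun f : Fin (k + 1) → Fin n =>
    (∀ i : Fin k, (f i.castSucc, f i.succ) ∈ E) ∧ f 0 = q ∧ f (Fin.last k) = p

/-- Walks of length `k` from `q` to `p` whose first edge is `(q, r)`. -/
def walksThrough (n : ℕ) (E : Finset (Fin n × Fin n)) (k : ℕ) (q r p : Fin n) :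
    Finset (Fin (k + 1) → Fin n) :=
  (walks n E k q p).filter fun f => f 1 = r

/-- Weight of a walk w.r.t. an in-weighting `A`: each edge `(u, v)` contributes `A v u`. -/
def walkWeight {n k : ℕ} (A : Matrix (Fin n) (Fin n) ℝ) (f : Fin (k + 1) → Fin n) : ℝ :=
  ∏ i : Fin k, A (f i.succ) (f i.castSucc)

/-- `Φ(Ω, A)`: sum of the weights of the walks in `Ω` w.r.t. `A`. -/
def phi {n k : ℕ} (A : Matrix (Fin n) (Fin n) ℝ) (Ω : Finset (Fin (k + 1) → Fin n)) : ℝ :=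
  ∑ f ∈ Ω, walkWeight A f

/-- Distance from `q` to `p` in the digraph: the least length of a walk, `⊤` if none. -/
noncomputable def gdist (n : ℕ) (E : Finset (Fin n × Fin n)) (q p : Fin n) : ℕ∞ :=
  ⨅ m ∈ {m : ℕ | (walks n E m q p).Nonempty}, (m : ℕ∞)

/-- Diameter of the digraph. -/
noncomputable def gdiam (n : ℕ) (E : Finset (Fin n × Fin n)) : ℕ∞ :=
  ⨆ q : Fin n, ⨆ p : Fin n, gdist n E q p

/-- `A` is an in-weighting on the digraph with edge set `E`. -/
def IsInWeighting {n : ℕ} (E : Finset (Fin n × Fin n))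
    (A : Matrix (Fin n) (Fin n) ℝ) : Prop :=
  ∀ p q : Fin n, (q, p) ∉ E → A p q = 0

/-- `Δ_{t_f}(p, k)`: jump of the `k`-th one-sided derivatives of `x_p` at `t_f`. -/
noncomputable def jump {n : ℕ} (x : ℝ → Fin n → ℝ) (tf : ℝ) (p : Fin n) (k : ℕ) : ℝ :=
  iteratedDerivWithin k (fun t => x t p) (Set.Ici tf) tf
    - iteratedDerivWithin k (fun t => x t p) (Set.Iic tf) tf


lemma phi_walks_zero {n : ℕ} (E : Finset (Fin n × Fin n)) (A : Matrix (Fin n) (Fin n) ℝ)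
    (q p : Fin n) : phi A (walks n E 0 q p) = if q = p then 1 else 0 := by
  classical
  by_cases h : q = p
  · subst h
    have hw : walks n E 0 q q = {fun _ => q} := by
      ext f
      simp only [walks, mem_filter, mem_univ, true_and, mem_singleton]
      constructor
      · rintro ⟨-, h0, -⟩
        exact funext fun i => by rw [Fin.eq_zero i, h0]
      · rintro rfl
        exact ⟨fun i => i.elim0, rfl, rfl⟩
    rw [hw, if_pos rfl]
    simp [phi, walkWeight]
  · have hw : walks n E 0 q p = ∅ := by
      ext f
      simp only [walks, mem_filter, mem_univ, true_and, notMem_empty, iff_false]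
      rintro ⟨-, h0, hlast⟩
      have : f (Fin.last 0) = f 0 := congrArg f (Fin.eq_zero _)
      exact h (h0.symm.trans (this.symm.trans hlast))
    rw [hw, if_neg h]
    simp [phi]

lemma phi_walks_eq_sum {n : ℕ} {E : Finset (Fin n × Fin n)} {A : Matrix (Fin n) (Fin n) ℝ}
    (hA : IsInWeighting E A) (k : ℕ) (q p : Fin n) :
    phi A (walks n E k q p) =
      ∑ f ∈ Finset.univ.filter
        (fun f : Fin (k + 1) → Fin n => f 0 = q ∧ f (Fin.last k) = p), walkWeight A f := by
  classical
  unfold phi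
  apply Finset.sum_subset
  · intro f hf
    simp only [walks, mem_filter, mem_univ, true_and] at hf ⊢
    exact ⟨hf.2.1, hf.2.2⟩
  · intro f hf hfn
    simp only [walks, mem_filter, mem_univ, true_and] at hf hfn
    have hed : ¬ (∀ i : Fin k, (f i.castSucc, f i.succ) ∈ E) := fun hall => hfn ⟨hall, hf⟩
    obtain ⟨i0, hi0⟩ := not_forall.1 hed
    exact Finset.prod_eq_zero (mem_univ i0) (hA (f i0.succ) (f i0.castSucc) hi0)

lemma phi_walks_succ {n : ℕ} {E : Finset (Fin n × Fin n)} {A : Matrix (Fin n) (Fin n) ℝ}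
    (hA : IsInWeighting E A) (k : ℕ) (q p : Fin n) :
    phi A (walks n E (k + 1) q p) = ∑ r : Fin n, A p r * phi A (walks n E k q r) := by
  classical
  rw [phi_walks_eq_sum hA]
  have : ∀ r : Fin n, A p r * phi A (walks n E k q r)
      = ∑ f ∈ Finset.univ.filter
          (fun f : Fin (k + 1) → Fin n => f 0 = q ∧ f (Fin.last k) = r),
          A p r * walkWeight A f := by
    intro r
    rw [phi_walks_eq_sum hA, Finset.mul_sum]
  simp_rw [this]
  rw [Finset.sum_sigma' (Finset.univ : Finset (Fin n))
    (fun r => Finset.univ.filter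
      (fun f : Fin (k + 1) → Fin n => f 0 = q ∧ f (Fin.last k) = r))
    (fun r f => A p r * walkWeight A f)]
  apply Finset.sum_nbij' (i := fun f => (⟨f ((Fin.last k).castSucc), Fin.init f⟩ :
      Σ _ : Fin n, Fin (k + 1) → Fin n))
    (j := fun rf => Fin.snoc rf.2 p)
  · intro f hf
    simp only [mem_filter, mem_univ, true_and] at hf
    simp only [Finset.mem_sigma, mem_univ, mem_filter, true_and]
    refine ⟨?_, rfl⟩
    show f (Fin.castSucc 0) = q
    rw [Fin.castSucc_zero]; exact hf.1
  · intro rf hrf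
    simp only [Finset.mem_sigma, mem_univ, mem_filter, true_and] at hrf
    simp only [mem_filter, mem_univ, true_and]
    constructor
    · rw [← Fin.castSucc_zero, Fin.snoc_castSucc]; exact hrf.1
    · rw [Fin.snoc_last]
  · intro f hf
    simp only [mem_filter, mem_univ, true_and] at hf
    show Fin.snoc (Fin.init f) p = f
    rw [← hf.2, Fin.snoc_init_self]
  · intro rf hrf
    simp only [Finset.mem_sigma, mem_univ, mem_filter, true_and] at hrf
    obtain ⟨r, g⟩ := rf
    have h2 : g (Fin.last k) = r := hrf.2
    simp only [Fin.snoc_castSucc, Fin.init_snoc]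
    rw [h2]
  · intro f hf
    simp only [mem_filter, mem_univ, true_and] at hf
    show walkWeight A f = A p (f ((Fin.last k).castSucc)) * walkWeight A (Fin.init f)
    have h1 : f (Fin.last k).succ = p := by rw [Fin.succ_last]; exact hf.2
    unfold walkWeight
    rw [Fin.prod_univ_castSucc (fun i : Fin (k + 1) => A (f i.succ) (f i.castSucc)), h1,
      mul_comm]
    congr 1

lemma walks_empty_of_lt_gdist {n : ℕ} {E : Finset (Fin n × Fin n)} {a : ℕ} {q p : Fin n}
    (h : (a : ℕ∞) < gdist n E q p) : walks n E a q p = ∅ := by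
  by_contra hne
  have hnonempty : (walks n E a q p).Nonempty := Finset.nonempty_of_ne_empty hne
  have : gdist n E q p ≤ (a : ℕ∞) := iInf₂_le a hnonempty
  exact absurd h (not_lt.2 this)

noncomputable def gvec {n m : ℕ} (M : Matrix (Fin n) (Fin n) ℝ) (B : Matrix (Fin n) (Fin m) ℝ)
    (x : ℝ → Fin n → ℝ) (w : ℝ → Fin m → ℝ) : ℕ → ℝ → Fin n → ℝ
  | 0 => x
  | r + 1 => fun t => M.mulVec (gvec M B x w r t) + B.mulVec (iteratedDeriv r w t)

lemma gvec_hasDeriv {n m : ℕ} {M : Matrix (Fin n) (Fin n) ℝ} {B : Matrix (Fin n) (Fin m) ℝ}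
    {x : ℝ → Fin n → ℝ} {w : ℝ → Fin m → ℝ} {s s' : Set ℝ} {K : ℕ}
    (hx : ∀ t ∈ s', HasDerivWithinAt x (M.mulVec (x t) + B.mulVec (w t)) s t)
    (hwd : ∀ r : ℕ, r < K → Differentiable ℝ (iteratedDeriv r w)) :
    ∀ r : ℕ, r < K → ∀ t ∈ s',
      HasDerivWithinAt (gvec M B x w r) (gvec M B x w (r + 1) t) s t := by
  intro r
  induction r with
  | zero =>
    intro _ t ht
    show HasDerivWithinAt x _ s t
    simpa [gvec, iteratedDeriv_zero] using hx t ht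
  | succ r ih =>
    intro hrK t ht
    have h1 : HasDerivWithinAt (gvec M B x w r) (gvec M B x w (r + 1) t) s t :=
      ih (by omega) t ht
    have hM : HasDerivWithinAt (fun u => M.mulVec (gvec M B x w r u))
        (M.mulVec (gvec M B x w (r + 1) t)) s t := by
      have := ((LinearMap.toContinuousLinearMap
        (Matrix.mulVecLin M)).hasFDerivAt).comp_hasDerivWithinAt t h1
      exact this
    have hw1 : HasDerivAt (iteratedDeriv r w) (iteratedDeriv (r + 1) w t) t := by
      rw [iteratedDeriv_succ]
      exact ((hwd r (by omega)) t).hasDerivAt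
    have hB : HasDerivWithinAt (fun u => B.mulVec (iteratedDeriv r w u))
        (B.mulVec (iteratedDeriv (r + 1) w t)) s t := by
      have := ((LinearMap.toContinuousLinearMap
        (Matrix.mulVecLin B)).hasFDerivAt).comp_hasDerivWithinAt t (hw1.hasDerivWithinAt (s := s))
      exact this
    exact hM.add hB

lemma iter_eq_gvec {n m : ℕ} {M : Matrix (Fin n) (Fin n) ℝ} {B : Matrix (Fin n) (Fin m) ℝ}
    {x : ℝ → Fin n → ℝ} {w : ℝ → Fin m → ℝ} {s s' : Set ℝ} {K : ℕ}
    (hs : UniqueDiffOn ℝ s) (hsub : s' ⊆ s)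
    (hnhd : ∀ t ∈ s', s' ∈ nhdsWithin t s)
    (hx : ∀ t ∈ s', HasDerivWithinAt x (M.mulVec (x t) + B.mulVec (w t)) s t)
    (hwd : ∀ r : ℕ, r < K → Differentiable ℝ (iteratedDeriv r w)) :
    ∀ r : ℕ, r ≤ K → ∀ t ∈ s', ∀ p : Fin n,
      iteratedDerivWithin r (fun u => x u p) s t = gvec M B x w r t p := by
  intro r
  induction r with
  | zero => intro _ t _ p; simp [gvec]
  | succ r ih =>
    intro hrK t ht p
    have hu : UniqueDiffWithinAt ℝ s t := hs t (hsub ht)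
    rw [iteratedDerivWithin_succ]
    have heq : (iteratedDerivWithin r (fun u => x u p) s)
        =ᶠ[nhdsWithin t s] (fun u => gvec M B x w r u p) := by
      filter_upwards [hnhd t ht] with u hu' using ih (by omega) u hu' p
    rw [heq.derivWithin_eq (ih (by omega) t ht p)]
    have hg : HasDerivWithinAt (fun u => gvec M B x w r u p)
        (gvec M B x w (r + 1) t p) s t := by
      have hv := gvec_hasDeriv hx hwd r (by omega) t ht
      have := (ContinuousLinearMap.proj (R := ℝ) (φ := fun _ : Fin n => ℝ)
        p).hasFDerivAt.comp_hasDerivWithinAt t hv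
      exact this
    exact hg.derivWithin hu

lemma gvec_diff {n m : ℕ} {E : Finset (Fin n × Fin n)} {A Abar : Matrix (Fin n) (Fin n) ℝ}
    {B : Matrix (Fin n) (Fin m) ℝ} {x : ℝ → Fin n → ℝ} {w : ℝ → Fin m → ℝ} {i : Fin n}
    (hA : IsInWeighting E A)
    (hrow : ∀ q r : Fin n, q ≠ i → Abar q r = A q r) (tf : ℝ) :
    ∀ r : ℕ, ∀ p' : Fin n,
      gvec Abar B x w r tf p' - gvec A B x w r tf p' =
        ∑ a ∈ Finset.range r, phi A (walks n E a i p') *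
          ∑ q : Fin n, (Abar i q - A i q) * gvec Abar B x w (r - 1 - a) tf q := by
  intro r
  induction r with
  | zero => intro p'; simp [gvec]
  | succ r ih =>
    intro p'
    have hL : gvec Abar B x w (r + 1) tf p' - gvec A B x w (r + 1) tf p'
        = (∑ q : Fin n, A p' q * (gvec Abar B x w r tf q - gvec A B x w r tf q))
          + ∑ q : Fin n, (Abar p' q - A p' q) * gvec Abar B x w r tf q := by
      show (Abar.mulVec (gvec Abar B x w r tf) + B.mulVec (iteratedDeriv r w tf)) p'
          - (A.mulVec (gvec A B x w r tf) + B.mulVec (iteratedDeriv r w tf)) p' = _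
      simp only [Pi.add_apply, Matrix.mulVec, dotProduct]
      rw [add_sub_add_right_eq_sub, ← Finset.sum_add_distrib, ← Finset.sum_sub_distrib]
      apply Finset.sum_congr rfl
      intro q _
      ring
    have hterm2 : (∑ q : Fin n, (Abar p' q - A p' q) * gvec Abar B x w r tf q)
        = phi A (walks n E 0 i p') *
            ∑ q : Fin n, (Abar i q - A i q) * gvec Abar B x w r tf q := by
      rw [phi_walks_zero]
      by_cases h : i = p'
      · subst h; rw [if_pos rfl, one_mul]
      · rw [if_neg h, zero_mul]
        apply Finset.sum_eq_zero; intro q _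
        rw [hrow p' q (fun hh => h hh.symm), sub_self, zero_mul]
    have hterm1 : (∑ q : Fin n, A p' q * (gvec Abar B x w r tf q - gvec A B x w r tf q))
        = ∑ a ∈ Finset.range r, phi A (walks n E (a + 1) i p') *
            ∑ q : Fin n, (Abar i q - A i q) * gvec Abar B x w (r - 1 - a) tf q := by
      calc (∑ q : Fin n, A p' q * (gvec Abar B x w r tf q - gvec A B x w r tf q))
          = ∑ q : Fin n, ∑ a ∈ Finset.range r, A p' q * (phi A (walks n E a i q) *
              ∑ q' : Fin n, (Abar i q' - A i q') * gvec Abar B x w (r - 1 - a) tf q') := by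
            apply Finset.sum_congr rfl; intro q _; rw [ih q, Finset.mul_sum]
        _ = ∑ a ∈ Finset.range r, ∑ q : Fin n, A p' q * (phi A (walks n E a i q) *
              ∑ q' : Fin n, (Abar i q' - A i q') * gvec Abar B x w (r - 1 - a) tf q') :=
            Finset.sum_comm
        _ = ∑ a ∈ Finset.range r, phi A (walks n E (a + 1) i p') *
              ∑ q' : Fin n, (Abar i q' - A i q') * gvec Abar B x w (r - 1 - a) tf q' := by
            apply Finset.sum_congr rfl
            intro a _
            rw [phi_walks_succ hA, Finset.sum_mul]
            apply Finset.sum_congr rfl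
            intro q _
            ring
    rw [hL, hterm1, hterm2,
      Finset.sum_range_succ' (fun a => phi A (walks n E a i p') *
        ∑ q : Fin n, (Abar i q - A i q) * gvec Abar B x w (r + 1 - 1 - a) tf q) r]
    simp only [show ∀ a : ℕ, r + 1 - 1 - (a + 1) = r - 1 - a from fun a => by omega,
      show r + 1 - 1 - 0 = r from by omega]

/-- Corollary 1: under the failed-link setup, for every
`k ≤ dist(G; j, p)` the jump of the `k`-th derivative of the output of node `p`
equals `c_{i,j,p} = Φ(Ω^{k-1}(G; i, p), A) · Σ_q (ā_{iq} - a_{iq}) x_q(tf)` when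
`k = dist(G; i, p) + 1`, and vanishes when `k < dist(G; i, p) + 1`. -/
theorem link_failure_jump_corollary {n m : ℕ} (E : Finset (Fin n × Fin n))
    (A Abar : Matrix (Fin n) (Fin n) ℝ) (B : Matrix (Fin n) (Fin m) ℝ)
    (j i p : Fin n) (hE : (j, i) ∈ E)
    (hA : IsInWeighting E A)
    (hAbar : IsInWeighting (E.erase (j, i)) Abar)
    (hij : Abar i j = 0)
    (hrow : ∀ q r : Fin n, q ≠ i → Abar q r = A q r)
    (x : ℝ → Fin n → ℝ) (w : ℝ → Fin m → ℝ) (t0 tf : ℝ) (ht : t0 < tf)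
    (hw : ContDiff ℝ (gdiam n E + 1) w)
    (hcont : ContinuousAt x tf)
    (hpre : ∀ t ∈ Set.Ioc t0 tf,
      HasDerivWithinAt x (A.mulVec (x t) + B.mulVec (w t)) (Set.Iic tf) t)
    (hpost : ∀ t ∈ Set.Ioi tf,
      HasDerivAt x (Abar.mulVec (x t) + B.mulVec (w t)) t) :
    ∀ k : ℕ, (k : ℕ∞) ≤ gdist n E j p →
      (((k : ℕ∞) = gdist n E i p + 1 →
          jump x tf p k =
            phi A (walks n E (k - 1) i p) * ∑ q : Fin n, (Abar i q - A i q) * x tf q)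
        ∧ ((k : ℕ∞) < gdist n E i p + 1 → jump x tf p k = 0)) := by
  intro k hk
  have hdistle : gdist n E j p ≤ gdiam n E :=
    le_iSup_of_le j (le_iSup (fun p' => gdist n E j p') p)
  have hkdiam : (k : ℕ∞) ≤ gdiam n E := le_trans hk hdistle
  have hwd : ∀ r : ℕ, r < k → Differentiable ℝ (iteratedDeriv r w) := by
    intro r hr
    apply hw.differentiable_iteratedDeriv r
    have h1 : (r : ℕ∞) < gdiam n E + 1 := by
      calc (r : ℕ∞) < (k : ℕ∞) := by exact_mod_cast hr
        _ ≤ gdiam n E := hkdiam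
        _ ≤ gdiam n E + 1 := le_self_add
    exact_mod_cast h1
  have hleft : iteratedDerivWithin k (fun u => x u p) (Set.Iic tf) tf
      = gvec A B x w k tf p := by
    refine iter_eq_gvec (s' := Set.Ioc t0 tf) (uniqueDiffOn_Iic tf)
      Set.Ioc_subset_Iic_self ?_ hpre hwd k le_rfl tf ⟨ht, le_refl tf⟩ p
    intro t ht'
    rw [mem_nhdsWithin]
    exact ⟨Set.Ioi t0, isOpen_Ioi, ht'.1, fun u hu => ⟨hu.1, hu.2⟩⟩
  have hxIci : ∀ t ∈ Set.Ici tf,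
      HasDerivWithinAt x (Abar.mulVec (x t) + B.mulVec (w t)) (Set.Ici tf) t := by
    intro t htt
    rcases eq_or_lt_of_le (Set.mem_Ici.1 htt) with heq | hlt
    · subst heq
      apply hasDerivWithinAt_Ici_of_tendsto_deriv (s := Set.Ioi tf)
      · intro u hu
        exact (hpost u hu).differentiableAt.differentiableWithinAt
      · exact hcont.continuousWithinAt
      · exact self_mem_nhdsWithin
      · have hev : (fun u => deriv x u) =ᶠ[nhdsWithin tf (Set.Ioi tf)]
            (fun u => Abar.mulVec (x u) + B.mulVec (w u)) := by
          filter_upwards [self_mem_nhdsWithin] with u hu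
          exact (hpost u hu).deriv
        rw [Filter.tendsto_congr' hev]
        have h1 : Filter.Tendsto x (nhdsWithin tf (Set.Ioi tf)) (nhds (x tf)) :=
          hcont.continuousWithinAt
        have h2 : Filter.Tendsto w (nhdsWithin tf (Set.Ioi tf)) (nhds (w tf)) :=
          (hw.continuous.continuousAt).continuousWithinAt
        have hA1 : Filter.Tendsto (fun u => Abar.mulVec (x u))
            (nhdsWithin tf (Set.Ioi tf)) (nhds (Abar.mulVec (x tf))) := by
          have := ((LinearMap.toContinuousLinearMap
            (Matrix.mulVecLin Abar)).continuous.tendsto (x tf)).comp h1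
          exact this
        have hB1 : Filter.Tendsto (fun u => B.mulVec (w u))
            (nhdsWithin tf (Set.Ioi tf)) (nhds (B.mulVec (w tf))) := by
          have := ((LinearMap.toContinuousLinearMap
            (Matrix.mulVecLin B)).continuous.tendsto (w tf)).comp h2
          exact this
        exact hA1.add hB1
    · exact (hpost t hlt).hasDerivWithinAt
  have hright : iteratedDerivWithin k (fun u => x u p) (Set.Ici tf) tf
      = gvec Abar B x w k tf p :=
    iter_eq_gvec (s' := Set.Ici tf) (uniqueDiffOn_Ici tf) (subset_refl _)
      (fun t _ => self_mem_nhdsWithin) hxIci hwd k le_rfl tf Set.self_mem_Ici p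
  have hjump : jump x tf p k = gvec Abar B x w k tf p - gvec A B x w k tf p := by
    unfold jump
    rw [hleft, hright]
  have hdiff := gvec_diff (B := B) (x := x) (w := w) hA hrow tf k p
  constructor
  · intro hkeq
    cases hd : gdist n E i p with
    | top => rw [hd] at hkeq; simp at hkeq
    | coe d =>
      rw [hd] at hkeq
      have hkd : k = d + 1 := by exact_mod_cast hkeq
      subst hkd
      rw [hjump, hdiff, Finset.sum_range_succ]
      have hz : ∀ a ∈ Finset.range d, phi A (walks n E a i p) *
          (∑ q : Fin n, (Abar i q - A i q) * gvec Abar B x w (d + 1 - 1 - a) tf q) = 0 := by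
        intro a ha
        rw [walks_empty_of_lt_gdist (q := i) (p := p)
          (by rw [hd]; exact_mod_cast Finset.mem_range.1 ha)]
        simp [phi]
      rw [Finset.sum_eq_zero hz, zero_add,
        show d + 1 - 1 - d = 0 from by omega, show d + 1 - 1 = d from by omega]
      rfl
  · intro hklt
    have hke : (k : ℕ∞) ≤ gdist n E i p := by
      cases hd : gdist n E i p with
      | top => exact le_top
      | coe d =>
        rw [hd] at hklt
        exact (ENat.lt_add_one_iff (ENat.coe_ne_top d)).1 hklt
    rw [hjump, hdiff]
    apply Finset.sum_eq_zero
    intro a ha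
    have : (a : ℕ∞) < gdist n E i p :=
      lt_of_lt_of_le (by exact_mod_cast Finset.mem_range.1 ha : (a : ℕ∞) < (k : ℕ∞)) hke
    rw [walks_empty_of_lt_gdist this]
    simp [phi]
end

section
/- Let G = (V,E) be a digraph with (ν_j, ν_i) ∈ E, let ν_p, ν_q be vertices, and let m ∈ ℕ with m ≤ dist(G; ν_j, ν_p). Then in any walk W of length m from ν_q to ν_p in G, every edge of W whose head is ν_i occurs only as the first edge of W; in particular, if W contains an edge of the form (ν_γ, ν_i) for some vertex ν_γ, then the first edge of W is (ν_q, ν_i). -/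
open Finset

/-- let `(j, i) ∈ E` and `m ≤ dist(G; j, p)`.  In any walk of
length `m` from `q` to `p`, an edge whose head is `i` can only occur as the first
edge of the walk (hence such an edge must be `(q, i)`). -/
theorem edge_into_head_only_first {n : ℕ} (E : Finset (Fin n × Fin n))
    (j i p q : Fin n) (hE : (j, i) ∈ E)
    (m : ℕ) (hm : (m : ℕ∞) ≤ gdist n E j p)
    (f : Fin (m + 1) → Fin n) (hf : f ∈ walks n E m q p) :
    ∀ t : Fin m, f t.succ = i → (t : ℕ) = 0 := by
  intro t ht
  by_contra h0
  have htlt : (t : ℕ) < m := t.isLt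
  have ht1 : 1 ≤ (t : ℕ) := Nat.one_le_iff_ne_zero.mpr h0
  simp only [walks, mem_filter, mem_univ, true_and] at hf
  obtain ⟨hEdges, hq, hp⟩ := hf
  set k : ℕ := m - (t : ℕ) with hk
  -- build a walk of length k from j to p
  set g : Fin (k + 1) → Fin n := fun s =>
    if (s : ℕ) = 0 then j
    else f ⟨(t : ℕ) + (s : ℕ), by have := s.isLt; omega⟩ with hg
  have hgw : g ∈ walks n E k j p := by
    simp only [walks, mem_filter, mem_univ, true_and]
    refine ⟨?_, ?_, ?_⟩
    · intro s
      have hs : (s : ℕ) < k := s.isLt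
      have hsucc : g s.succ = f ⟨(t : ℕ) + (s : ℕ) + 1, by omega⟩ := by
        have : ((s.succ : Fin (k + 1)) : ℕ) = (s : ℕ) + 1 := rfl
        simp only [hg, this, Nat.succ_ne_zero, if_false]
        rfl
      by_cases hs0 : (s : ℕ) = 0
      · have hcast : g s.castSucc = j := by
          simp only [hg, Fin.coe_castSucc, hs0, ↓reduceIte]
        have : g s.succ = i := by
          rw [hsucc, ← ht]
          congr 1
          exact Fin.ext (by simp [Fin.val_succ]; omega)
        rw [hcast, this]; exact hE
      · have hcast : g s.castSucc = f ⟨(t : ℕ) + (s : ℕ), by omega⟩ := by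
          simp only [hg, Fin.coe_castSucc, hs0, if_false]
        rw [hcast, hsucc]
        have := hEdges ⟨(t : ℕ) + (s : ℕ), by omega⟩
        convert this using 3 <;> exact Fin.ext rfl
    · simp [hg]
    · have hk0 : ((Fin.last k : Fin (k + 1)) : ℕ) ≠ 0 := by
        simp [Fin.last]; omega
      simp only [hg, hk0, if_false]
      rw [← hp]
      congr 1
      exact Fin.ext (by simp [Fin.last]; omega)
  have hle : gdist n E j p ≤ (k : ℕ∞) := by
    apply iInf₂_le
    exact ⟨g, hgw⟩
  have : (m : ℕ∞) ≤ (k : ℕ∞) := le_trans hm hle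
  have : m ≤ k := by exact_mod_cast this
  omega
end

section
/- Let A be an in-weighting on a digraph G = (V,E) with (ν_j, ν_i) ∈ E, and let Ā be an in-weighting on Ḡ = (V, E∖{(ν_j, ν_i)}) with ā_{ij} = 0 and ā_{qr} = a_{qr} for all q ≠ i and all r. Then for every vertex ν_p and every s ∈ ℕ with s ≤ dist(G; ν_j, ν_p) − 1, the (p,i) entries of the matrix powers agree: [Ā^s]_{pi} = [A^s]_{pi} (equivalently, Φ(Ω^s(Ḡ; ν_i, ν_p), Ā) = Φ(Ω^s(G; ν_i, ν_p), A)). -/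
open Finset

section Aux

variable {n : ℕ}

def snocEquiv (s : ℕ) : ((Fin (s+1) → Fin n) × Fin n) ≃ (Fin (s+2) → Fin n) where
  toFun gx := Fin.snoc gx.1 gx.2
  invFun f := (Fin.init f, f (Fin.last (s+1)))
  left_inv := fun ⟨g, x⟩ => by simp
  right_inv := fun f => by simp

lemma snoc_weight {s : ℕ} (A : Matrix (Fin n) (Fin n) ℝ) (g : Fin (s+1) → Fin n) (x : Fin n) :
    walkWeight A (Fin.snoc g x) = walkWeight A g * A x (g (Fin.last s)) := by
  unfold walkWeight
  rw [Fin.prod_univ_castSucc]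
  congr 1
  · refine Finset.prod_congr rfl fun t _ => ?_
    rw [Fin.succ_castSucc, Fin.snoc_castSucc, Fin.snoc_castSucc]
  · rw [Fin.succ_last, Fin.snoc_last, Fin.snoc_castSucc]

lemma pow_eq_sum (A : Matrix (Fin n) (Fin n) ℝ) (s : ℕ) (q p : Fin n) :
    (A ^ s) p q = ∑ f : Fin (s+1) → Fin n,
      if f 0 = q ∧ f (Fin.last s) = p then walkWeight A f else 0 := by
  induction s generalizing p with
  | zero =>
    rw [pow_zero, Matrix.one_apply]
    rw [Fintype.sum_equiv (Equiv.funUnique (Fin 1) (Fin n))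
      (fun f : Fin 1 → Fin n => if f 0 = q ∧ f (Fin.last 0) = p then walkWeight A f else 0)
      (fun x : Fin n => if x = q ∧ x = p then (1:ℝ) else 0)
      (fun f => by
        have : (Fin.last 0) = (0 : Fin 1) := rfl
        simp [this, walkWeight, Equiv.funUnique])]
    simp only [ite_and, Finset.sum_ite_eq', Finset.mem_univ, if_true]
    by_cases h : q = p <;> simp [h, eq_comm]
  | succ s ih =>
    rw [pow_succ', Matrix.mul_apply]
    rw [← Equiv.sum_comp (snocEquiv s)]
    rw [Fintype.sum_prod_type]
    have hL : ∀ (g : Fin (s+1) → Fin n) (x : Fin n),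
        (if (snocEquiv s (g, x)) 0 = q ∧ (snocEquiv s (g, x)) (Fin.last (s+1)) = p
          then walkWeight A (snocEquiv s (g, x)) else 0)
        = if g 0 = q ∧ x = p then walkWeight A g * A x (g (Fin.last s)) else 0 := by
      intro g x
      have h0 : (snocEquiv s (g, x)) 0 = g 0 := by
        show (Fin.snoc g x : Fin (s+2) → Fin n) 0 = g 0
        rw [show (0 : Fin (s+2)) = Fin.castSucc 0 from rfl, Fin.snoc_castSucc]
      have hl : (snocEquiv s (g, x)) (Fin.last (s+1)) = x := by
        show (Fin.snoc g x : Fin (s+2) → Fin n) (Fin.last (s+1)) = x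
        rw [Fin.snoc_last]
      rw [h0, hl, show (snocEquiv s (g,x) : Fin (s+2) → Fin n) = Fin.snoc g x from rfl,
        snoc_weight]
    simp only [hL]
    have hR : ∀ g : Fin (s+1) → Fin n,
        (∑ x : Fin n, if g 0 = q ∧ x = p then walkWeight A g * A x (g (Fin.last s)) else 0)
        = if g 0 = q then walkWeight A g * A p (g (Fin.last s)) else 0 := by
      intro g
      by_cases hg : g 0 = q <;> simp [hg]
    simp only [hR]
    have hih : ∀ j : Fin n, A p j * (A ^ s) j q
        = ∑ g : Fin (s+1) → Fin n, if g 0 = q ∧ g (Fin.last s) = j then A p j * walkWeight A g else 0 := by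
      intro j
      rw [ih j, Finset.mul_sum]
      exact Finset.sum_congr rfl fun g _ => by rw [mul_ite, mul_zero]
    simp only [hih]
    rw [Finset.sum_comm]
    refine Finset.sum_congr rfl fun g _ => ?_
    by_cases hg : g 0 = q
    · simp only [hg, true_and, mul_ite, mul_zero, Finset.sum_ite_eq, Finset.mem_univ,
        if_true]
      exact mul_comm _ _
    · simp [hg]

lemma sum_eq_phi {E : Finset (Fin n × Fin n)} {A : Matrix (Fin n) (Fin n) ℝ}
    (hA : IsInWeighting E A) (s : ℕ) (q p : Fin n) :
    (∑ f : Fin (s+1) → Fin n,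
      if f 0 = q ∧ f (Fin.last s) = p then walkWeight A f else 0)
      = phi A (walks n E s q p) := by
  rw [← Finset.sum_filter]
  unfold phi walks
  symm
  apply Finset.sum_subset
  · intro f hf
    simp only [Finset.mem_filter, Finset.mem_univ, true_and] at hf ⊢
    exact hf.2
  · intro f hf hnf
    simp only [Finset.mem_filter, Finset.mem_univ, true_and] at hf hnf
    have : ¬ ∀ t : Fin s, (f t.castSucc, f t.succ) ∈ E := fun h => hnf ⟨h, hf⟩
    push_neg at this
    obtain ⟨t, ht⟩ := this
    exact Finset.prod_eq_zero (Finset.mem_univ t) (hA _ _ ht)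

lemma pow_eq_phi {E : Finset (Fin n × Fin n)} {A : Matrix (Fin n) (Fin n) ℝ}
    (hA : IsInWeighting E A) (s : ℕ) (q p : Fin n) :
    (A ^ s) p q = phi A (walks n E s q p) := by
  rw [pow_eq_sum, sum_eq_phi hA]

lemma gdist_le_of_walk {E : Finset (Fin n × Fin n)} {m : ℕ} {q p : Fin n}
    (h : (walks n E m q p).Nonempty) : gdist n E q p ≤ m :=
  iInf₂_le m h

lemma cons_walk {E : Finset (Fin n × Fin n)} {m : ℕ} {i j p : Fin n} (hE : (j, i) ∈ E)
    {f : Fin (m+1) → Fin n} (hf : f ∈ walks n E m i p) :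
    Fin.cons j f ∈ walks n E (m+1) j p := by
  simp only [walks, Finset.mem_filter, Finset.mem_univ, true_and] at hf ⊢
  obtain ⟨hedge, h0, hl⟩ := hf
  refine ⟨?_, ?_, ?_⟩
  · intro t
    induction t using Fin.cases with
    | zero =>
      simpa [Fin.castSucc_zero, Fin.cons_zero, Fin.cons_succ, h0] using hE
    | succ t =>
      rw [← Fin.succ_castSucc, Fin.cons_succ, Fin.cons_succ]
      exact hedge t
  · rfl
  · rw [← Fin.succ_last, Fin.cons_succ]
    exact hl

lemma no_return {E : Finset (Fin n × Fin n)} {s : ℕ} {i p : Fin n}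
    (hdist : (s : ℕ∞) ≤ gdist n E i p)
    {f : Fin (s+1) → Fin n} (hf : f ∈ walks n E s i p)
    (t : Fin (s+1)) (ht : 0 < t.val) : f t ≠ i := by
  intro hfi
  simp only [walks, Finset.mem_filter, Finset.mem_univ, true_and] at hf
  obtain ⟨hedge, h0, hl⟩ := hf
  have htle : t.val ≤ s := Nat.lt_succ_iff.mp t.isLt
  set g : Fin (s - t.val + 1) → Fin n := fun m => f ⟨t.val + m.val, by omega⟩ with hg
  have hgw : g ∈ walks n E (s - t.val) i p := by
    simp only [walks, Finset.mem_filter, Finset.mem_univ, true_and]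
    refine ⟨?_, ?_, ?_⟩
    · intro m
      have := hedge ⟨t.val + m.val, by omega⟩
      convert this using 2 <;> rfl
    · show f ⟨t.val + 0, _⟩ = i
      convert hfi using 2
      exact Fin.ext (Nat.add_zero _)
    · show f ⟨t.val + (s - t.val), _⟩ = p
      convert hl using 2
      simp [Fin.last]
      omega
  have h1 : gdist n E i p ≤ (s - t.val : ℕ) := gdist_le_of_walk ⟨g, hgw⟩
  have h2 : (s : ℕ∞) ≤ (s - t.val : ℕ) := le_trans hdist h1
  rw [Nat.cast_le] at h2
  omega

end Aux

/-- with `A` an in-weighting on `G`, `(j, i) ∈ E`, and `Ā` an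
in-weighting on `Ḡ = G - (j, i)` agreeing with `A` off row `i` and with `ā_{ij} = 0`,
for every `s ≤ dist(G; j, p) - 1` the `(p, i)` entries of the matrix powers agree,
equivalently `Φ(Ω^s(Ḡ; i, p), Ā) = Φ(Ω^s(G; i, p), A)`. -/
theorem pow_entry_unchanged {n : ℕ} (E : Finset (Fin n × Fin n))
    (A Abar : Matrix (Fin n) (Fin n) ℝ)
    (j i p : Fin n) (hE : (j, i) ∈ E)
    (hA : IsInWeighting E A)
    (hAbar : IsInWeighting (E.erase (j, i)) Abar)
    (hij : Abar i j = 0)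
    (hrow : ∀ q r : Fin n, q ≠ i → Abar q r = A q r)
    (s : ℕ) (hs : (s : ℕ∞) ≤ gdist n E j p - 1) :
    (Abar ^ s) p i = (A ^ s) p i
      ∧ phi Abar (walks n (E.erase (j, i)) s i p) = phi A (walks n E s i p) := by
  have hphi : phi Abar (walks n (E.erase (j, i)) s i p) = phi A (walks n E s i p) := by
    rcases Nat.eq_zero_or_pos s with hs0 | hspos
    · subst hs0
      have hsets : walks n (E.erase (j, i)) 0 i p = walks n E 0 i p := by
        ext f; simp [walks]
      rw [hsets]
      unfold phi walkWeight
      simp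
    · have hb : (1 : ℕ∞) ≤ gdist n E j p := by
        rw [ENat.one_le_iff_ne_zero]
        intro h0
        rw [h0, zero_tsub] at hs
        have h1 : (s : ℕ∞) = 0 := le_antisymm hs zero_le
        have := Nat.cast_eq_zero.mp h1
        omega
      have hs1 : (s : ℕ∞) + 1 ≤ gdist n E j p := by
        cases hd : gdist n E j p with
        | top => exact le_top
        | coe m =>
          rw [hd] at hs hb
          have hm : 1 ≤ m := by exact_mod_cast hb
          have h4 : (s : ℕ∞) ≤ ((m - 1 : ℕ) : ℕ∞) := by
            rw [ENat.coe_sub, Nat.cast_one]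
            exact hs
          have hsm : s ≤ m - 1 := Nat.cast_le.mp h4
          exact_mod_cast (show s + 1 ≤ m by omega)
      have hdist : (s : ℕ∞) ≤ gdist n E i p := by
        unfold gdist
        refine le_iInf₂ fun m hm => ?_
        obtain ⟨f, hf⟩ := hm
        have h1 : gdist n E j p ≤ ((m + 1 : ℕ) : ℕ∞) :=
          gdist_le_of_walk ⟨Fin.cons j f, cons_walk hE hf⟩
        have h2 : ((s + 1 : ℕ) : ℕ∞) ≤ ((m + 1 : ℕ) : ℕ∞) := by
          push_cast
          exact le_trans hs1 (by exact_mod_cast h1)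
        have h3 : s + 1 ≤ m + 1 := Nat.cast_le.mp h2
        exact Nat.cast_le.mpr (by omega)
      have hsets : walks n (E.erase (j, i)) s i p = walks n E s i p := by
        ext f
        simp only [walks, Finset.mem_filter, Finset.mem_univ, true_and]
        constructor
        · rintro ⟨he, h0, hl⟩
          exact ⟨fun t => Finset.mem_of_mem_erase (he t), h0, hl⟩
        · rintro ⟨he, h0, hl⟩
          have hfE : f ∈ walks n E s i p := by
            simp only [walks, Finset.mem_filter, Finset.mem_univ, true_and]
            exact ⟨he, h0, hl⟩
          refine ⟨fun t => Finset.mem_erase.mpr ⟨?_, he t⟩, h0, hl⟩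
          intro hcontra
          have hfi : f t.succ = i := congrArg Prod.snd hcontra
          exact no_return hdist hfE t.succ (by simp [Fin.val_succ]) hfi
      rw [hsets]
      unfold phi
      refine Finset.sum_congr rfl fun f hf => ?_
      unfold walkWeight
      refine Finset.prod_congr rfl fun t _ => ?_
      exact hrow _ _ (no_return hdist hf t.succ (by simp [Fin.val_succ]))
  exact ⟨by rw [pow_eq_phi hAbar, pow_eq_phi hA, hphi], hphi⟩
end

section
/- Let A be an in-weighting on a digraph G = (V,E) with (ν_j, ν_i) ∈ E, and let Ā be an in-weighting on Ḡ = (V, E∖{(ν_j, ν_i)}) with ā_{ij} = 0 and ā_{qr} = a_{qr} for all q ≠ i and all r. Then for every vertex ν_p, all q ∈ {1,…,n}, and every m ∈ ℕ with 1 ≤ m ≤ dist(G; ν_j, ν_p): [Ā^m]_{pq} − [A^m]_{pq} = (ā_{iq} − a_{iq}) · [A^{m−1}]_{pi}. -/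
open Finset

lemma walks_one_nonempty {n : ℕ} (E : Finset (Fin n × Fin n)) {q p : Fin n}
    (h : (q, p) ∈ E) : (walks n E 1 q p).Nonempty := by
  refine ⟨![q, p], ?_⟩
  simp only [walks, Finset.mem_filter, Finset.mem_univ, true_and]
  refine ⟨fun i => ?_, rfl, rfl⟩
  fin_cases i
  simpa using h

lemma le_gdist_iff {n : ℕ} (E : Finset (Fin n × Fin n)) (q p : Fin n) (m : ℕ) :
    (m : ℕ∞) ≤ gdist n E q p ↔ ∀ s : ℕ, (walks n E s q p).Nonempty → m ≤ s := by
  simp [gdist, le_iInf_iff, Set.mem_setOf_eq, Nat.cast_le]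

lemma walks_snoc {n s : ℕ} (E : Finset (Fin n × Fin n)) {j r p : Fin n}
    (hf : (walks n E s j r).Nonempty) (hrp : (r, p) ∈ E) :
    (walks n E (s + 1) j p).Nonempty := by
  obtain ⟨f, hf⟩ := hf
  simp only [walks, Finset.mem_filter, Finset.mem_univ, true_and] at hf
  obtain ⟨hedge, h0, hl⟩ := hf
  refine ⟨Fin.snoc f p, ?_⟩
  simp only [walks, Finset.mem_filter, Finset.mem_univ, true_and]
  refine ⟨fun i => ?_, ?_, ?_⟩
  · refine Fin.lastCases ?_ ?_ i
    · simpa [Fin.succ_last, Fin.snoc_last, Fin.snoc_castSucc, hl] using hrp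
    · intro i'
      simp only [Fin.succ_castSucc, Fin.snoc_castSucc]
      exact hedge i'
  · rw [show (0 : Fin (s + 1 + 1)) = Fin.castSucc 0 from rfl, Fin.snoc_castSucc]
    exact h0
  · exact Fin.snoc_last _ _

lemma pow_perturbation_aux {n : ℕ} (E : Finset (Fin n × Fin n))
    (A Abar : Matrix (Fin n) (Fin n) ℝ)
    (j i : Fin n) (hE : (j, i) ∈ E)
    (hA : IsInWeighting E A)
    (hrow : ∀ q r : Fin n, q ≠ i → Abar q r = A q r) :
    ∀ m : ℕ, ∀ p q : Fin n, 1 ≤ m → (m : ℕ∞) ≤ gdist n E j p →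
      (Abar ^ m) p q - (A ^ m) p q = (Abar i q - A i q) * (A ^ (m - 1)) p i := by
  intro m
  induction m with
  | zero => intro p q h; exact absurd h (by omega)
  | succ m ih =>
    rcases m with _ | m'
    · -- m = 1
      intro p q _ _
      by_cases hpi : p = i
      · subst hpi
        simp [pow_one, pow_zero, Matrix.one_apply]
      · simp [pow_one, pow_zero, Matrix.one_apply, hpi, hrow p q hpi]
    · intro p q _ hdist
      have hpi : p ≠ i := by
        rintro rfl
        have h1 := (le_gdist_iff E j p (m' + 1 + 1)).mp hdist 1 (walks_one_nonempty E hE)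
        omega
      have key : ∀ r : Fin n, A p r ≠ 0 → ((m' + 1 : ℕ) : ℕ∞) ≤ gdist n E j r := by
        intro r hr
        have hrE : (r, p) ∈ E := by
          by_contra hne; exact hr (hA p r hne)
        rw [le_gdist_iff]
        intro s hs
        have := (le_gdist_iff E j p (m' + 1 + 1)).mp hdist (s + 1) (walks_snoc E hs hrE)
        omega
      rw [pow_succ' (a := Abar), pow_succ' (a := A)]
      simp only [Matrix.mul_apply]
      rw [← Finset.sum_sub_distrib]
      have hterm : ∀ r ∈ Finset.univ, Abar p r * (Abar ^ (m' + 1)) r q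
            - A p r * (A ^ (m' + 1)) r q
          = A p r * ((Abar i q - A i q) * (A ^ m') r i) := by
        intro r _
        rw [hrow p r hpi]
        by_cases hr : A p r = 0
        · simp [hr]
        · rw [← mul_sub, ih r q (by omega) (key r hr), Nat.add_sub_cancel]
      rw [Finset.sum_congr rfl hterm]
      show _ = (Abar i q - A i q) * (A ^ (m' + 1)) p i
      rw [pow_succ' (a := A), Matrix.mul_apply, Finset.mul_sum]
      exact Finset.sum_congr rfl fun r _ => by ring

/-- under the failed-link setup, for `1 ≤ m ≤ dist(G; j, p)`:
`[Ā^m]_{pq} - [A^m]_{pq} = (ā_{iq} - a_{iq}) · [A^{m-1}]_{pi}`. -/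
theorem pow_perturbation_formula {n : ℕ} (E : Finset (Fin n × Fin n))
    (A Abar : Matrix (Fin n) (Fin n) ℝ)
    (j i p : Fin n) (hE : (j, i) ∈ E)
    (hA : IsInWeighting E A)
    (hAbar : IsInWeighting (E.erase (j, i)) Abar)
    (hij : Abar i j = 0)
    (hrow : ∀ q r : Fin n, q ≠ i → Abar q r = A q r) :
    ∀ q : Fin n, ∀ m : ℕ, 1 ≤ m → (m : ℕ∞) ≤ gdist n E j p →
      (Abar ^ m) p q - (A ^ m) p q = (Abar i q - A i q) * (A ^ (m - 1)) p i := fun q m h1 h2 =>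
  pow_perturbation_aux E A Abar j i hE hA hrow m p q h1 h2
end

section
/- Let A, Ā ∈ ℝ^{n×n}, B ∈ ℝ^{n×m}, let t_f ∈ ℝ, let w : ℝ → ℝ^m be k-times continuously differentiable in a neighborhood of t_f, and let x : ℝ → ℝ^n be continuous at t_f, satisfy ẋ(t) = A x(t) + B w(t) for t < t_f, and ẋ(t) = Ā x(t) + B w(t) for t > t_f. Then for every k ≥ 1 and every p ∈ {1,…,n}, the jump of the k-th one-sided derivative of x_p at t_f satisfies Δ_{t_f}(p,k) = e_p^T (Ā^k − A^k) x(t_f) + e_p^T (Ā^{k−1} − A^{k−1}) B w(t_f) + Σ_{m=0}^{k−2} e_p^T (Ā^m − A^m) B w^{(k−m−1)}(t_f). -/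
open Set Filter Topology

section Aux
variable {a c : ℕ}

lemma hasDerivAt_mulVec (M : Matrix (Fin a) (Fin c) ℝ) {f : ℝ → Fin c → ℝ}
    {f' : Fin c → ℝ} {t : ℝ} (hf : HasDerivAt f f' t) :
    HasDerivAt (fun y => M.mulVec (f y)) (M.mulVec f') t := by
  have := ((LinearMap.toContinuousLinearMap M.mulVecLin).hasFDerivAt
    (x := f t)).comp_hasDerivAt t hf
  simpa [Function.comp_def] using this

lemma continuousAt_mulVec (M : Matrix (Fin a) (Fin c) ℝ) {f : ℝ → Fin c → ℝ}
    {t : ℝ} (hf : ContinuousAt f t) :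
    ContinuousAt (fun y => M.mulVec (f y)) t := by
  have := ((LinearMap.toContinuousLinearMap M.mulVecLin).continuous.continuousAt
    (x := f t)).comp hf
  simpa [Function.comp_def] using this

lemma iteratedDerivWithin_inter'' {f : ℝ → ℝ} {s u : Set ℝ} {x : ℝ} {j : ℕ} (hu : u ∈ 𝓝 x) :
    iteratedDerivWithin j f (s ∩ u) x = iteratedDerivWithin j f s x := by
  simp only [iteratedDerivWithin_eq_iteratedFDerivWithin, iteratedFDerivWithin_inter hu]

lemma w_package {k : ℕ} {m : ℕ} {w : ℝ → Fin m → ℝ} {tf : ℝ} (hw : ContDiffAt ℝ k w tf) :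
    ∃ v : Set ℝ, IsOpen v ∧ tf ∈ v ∧
      ∀ t ∈ v, ∀ j < k, HasDerivAt (iteratedDeriv j w) (iteratedDeriv (j + 1) w t) t := by
  obtain ⟨u, hu, hwu⟩ := hw.contDiffOn le_rfl (by simp)
  obtain ⟨v, hvu, hvo, htv⟩ := mem_nhds_iff.1 hu
  refine ⟨v, hvo, htv, ?_⟩
  intro t htv' j hj
  have hcd : ContDiffOn ℝ k w v := hwu.mono hvu
  have hdo : DifferentiableOn ℝ (iteratedDerivWithin j w v) v :=
    hcd.differentiableOn_iteratedDerivWithin (by exact_mod_cast hj) hvo.uniqueDiffOn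
  have heq : Set.EqOn (iteratedDerivWithin j w v) (iteratedDeriv j w) v := by
    intro y hy
    simp only [iteratedDerivWithin_eq_iteratedFDerivWithin, iteratedDeriv_eq_iteratedFDeriv,
      iteratedFDerivWithin_of_isOpen j hvo hy]
  have hdiff : DifferentiableAt ℝ (iteratedDeriv j w) t := by
    have h1 := (hdo t htv').differentiableAt (hvo.mem_nhds htv')
    exact h1.congr_of_eventuallyEq
      (Filter.eventually_of_mem (hvo.mem_nhds htv') fun y hy => (heq hy).symm)
  rw [iteratedDeriv_succ]
  exact hdiff.hasDerivAt

end Aux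

lemma side_right {n m : ℕ} (M : Matrix (Fin n) (Fin n) ℝ) (B : Matrix (Fin n) (Fin m) ℝ)
    {tf b : ℝ} (hb : tf < b) {w : ℝ → Fin m → ℝ} {x : ℝ → Fin n → ℝ} {k : ℕ}
    (hcont : ContinuousAt x tf)
    (hx : ∀ t ∈ Ioo tf b, HasDerivAt x (M.mulVec (x t) + B.mulVec (w t)) t)
    (hwd : ∀ t ∈ Ico tf b, ∀ j < k, HasDerivAt (iteratedDeriv j w) (iteratedDeriv (j + 1) w t) t)
    (p : Fin n) :
    iteratedDerivWithin k (fun t => x t p) (Ico tf b) tf =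
      ((M ^ k).mulVec (x tf)
        + ∑ i ∈ Finset.range k, (M ^ i).mulVec (B.mulVec (iteratedDeriv (k - 1 - i) w tf))) p := by
  set X : ℕ → ℝ → Fin n → ℝ := fun j t =>
    (M ^ j).mulVec (x t)
      + ∑ i ∈ Finset.range j, (M ^ i).mulVec (B.mulVec (iteratedDeriv (j - 1 - i) w t))
    with hX
  have hXcont : ∀ j ≤ k, ContinuousAt (X j) tf := by
    intro j hj
    have h1 : ContinuousAt (fun t => (M ^ j).mulVec (x t)) tf := continuousAt_mulVec _ hcont
    have h2 : ContinuousAt (fun t => ∑ i ∈ Finset.range j,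
        (M ^ i).mulVec (B.mulVec (iteratedDeriv (j - 1 - i) w t))) tf := by
      apply tendsto_finset_sum
      intro i hi
      have hi' := Finset.mem_range.1 hi
      have : ContinuousAt (iteratedDeriv (j - 1 - i) w) tf :=
        (hwd tf ⟨le_rfl, hb⟩ (j - 1 - i) (by omega)).continuousAt
      exact continuousAt_mulVec _ (continuousAt_mulVec _ this)
    exact h1.add h2
  have hXd : ∀ j, j < k → ∀ t ∈ Ico tf b, HasDerivWithinAt (X j) (X (j + 1) t) (Ico tf b) t := by
    intro j hj
    have hint : ∀ t ∈ Ioo tf b, HasDerivAt (X j) (X (j + 1) t) t := by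
      intro t ht
      have h1 : HasDerivAt (fun y => (M ^ j).mulVec (x y))
          ((M ^ j).mulVec (M.mulVec (x t) + B.mulVec (w t))) t :=
        hasDerivAt_mulVec _ (hx t ht)
      have h2 : HasDerivAt (fun y => ∑ i ∈ Finset.range j,
            (M ^ i).mulVec (B.mulVec (iteratedDeriv (j - 1 - i) w y)))
          (∑ i ∈ Finset.range j, (M ^ i).mulVec (B.mulVec (iteratedDeriv (j - i) w t))) t := by
        apply HasDerivAt.fun_sum
        intro i hi
        have hi' := Finset.mem_range.1 hi
        have hd := hwd t (Ioo_subset_Ico_self ht) (j - 1 - i) (by omega)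
        have h3 : j - 1 - i + 1 = j - i := by omega
        rw [h3] at hd
        exact hasDerivAt_mulVec _ (hasDerivAt_mulVec _ hd)
      have hsum := h1.add h2
      convert hsum using 1
      iterate 4 rfl
      simp only [hX, Finset.sum_range_succ, Nat.add_sub_cancel, Nat.sub_self, iteratedDeriv_zero,
        Matrix.mulVec_add, Matrix.mulVec_mulVec, ← pow_succ]
      abel
    intro t ht
    rcases eq_or_lt_of_le ht.1 with heq | hlt
    · subst heq
      have hend : HasDerivWithinAt (X j) (X (j + 1) tf) (Ici tf) tf := by
        apply hasDerivWithinAt_Ici_of_tendsto_deriv (s := Ioo tf b)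
        · intro y hy
          exact (hint y hy).differentiableAt.differentiableWithinAt
        · exact (hXcont j hj.le).continuousWithinAt
        · exact Ioo_mem_nhdsGT_of_mem ⟨le_rfl, hb⟩
        · have h1 : Tendsto (X (j + 1)) (𝓝[>] tf) (𝓝 (X (j + 1) tf)) :=
            ((hXcont (j + 1) hj).tendsto).mono_left nhdsWithin_le_nhds
          refine Tendsto.congr' ?_ h1
          filter_upwards [Ioo_mem_nhdsGT_of_mem ⟨le_rfl, hb⟩] with y hy
          exact ((hint y hy).deriv).symm
      exact hend.mono Ico_subset_Ici_self
    · exact (hint t ⟨hlt, ht.2⟩).hasDerivWithinAt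
  have hud := uniqueDiffOn_Ico tf b
  have hXp : ∀ j, j ≤ k → ∀ t ∈ Ico tf b,
      iteratedDerivWithin j (fun t => x t p) (Ico tf b) t = X j t p := by
    intro j
    induction j with
    | zero =>
      intro _ t ht
      simp [hX, Matrix.one_mulVec]
    | succ j ih =>
      intro hjk t ht
      rw [iteratedDerivWithin_succ]
      have hcongr : derivWithin (iteratedDerivWithin j (fun t => x t p) (Ico tf b)) (Ico tf b) t
          = derivWithin (fun t => X j t p) (Ico tf b) t :=
        derivWithin_congr (fun y hy => ih (by omega) y hy) (ih (by omega) t ht)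
      rw [hcongr]
      have hD : HasDerivWithinAt (fun t => X j t p) (X (j + 1) t p) (Ico tf b) t := by
        have := ((ContinuousLinearMap.proj (R := ℝ) (φ := fun _ : Fin n => ℝ)
          p).hasFDerivAt).comp_hasDerivWithinAt t (hXd j (by omega) t ht)
        simpa [Function.comp_def] using this
      exact hD.derivWithin (hud t ht)
  exact hXp k le_rfl tf ⟨le_rfl, hb⟩

lemma side_left {n m : ℕ} (M : Matrix (Fin n) (Fin n) ℝ) (B : Matrix (Fin n) (Fin m) ℝ)
    {tf a : ℝ} (ha : a < tf) {w : ℝ → Fin m → ℝ} {x : ℝ → Fin n → ℝ} {k : ℕ}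
    (hcont : ContinuousAt x tf)
    (hx : ∀ t ∈ Ioo a tf, HasDerivAt x (M.mulVec (x t) + B.mulVec (w t)) t)
    (hwd : ∀ t ∈ Ioc a tf, ∀ j < k, HasDerivAt (iteratedDeriv j w) (iteratedDeriv (j + 1) w t) t)
    (p : Fin n) :
    iteratedDerivWithin k (fun t => x t p) (Ioc a tf) tf =
      ((M ^ k).mulVec (x tf)
        + ∑ i ∈ Finset.range k, (M ^ i).mulVec (B.mulVec (iteratedDeriv (k - 1 - i) w tf))) p := by
  set X : ℕ → ℝ → Fin n → ℝ := fun j t =>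
    (M ^ j).mulVec (x t)
      + ∑ i ∈ Finset.range j, (M ^ i).mulVec (B.mulVec (iteratedDeriv (j - 1 - i) w t))
    with hX
  have hXcont : ∀ j ≤ k, ContinuousAt (X j) tf := by
    intro j hj
    have h1 : ContinuousAt (fun t => (M ^ j).mulVec (x t)) tf := continuousAt_mulVec _ hcont
    have h2 : ContinuousAt (fun t => ∑ i ∈ Finset.range j,
        (M ^ i).mulVec (B.mulVec (iteratedDeriv (j - 1 - i) w t))) tf := by
      apply tendsto_finset_sum
      intro i hi
      have hi' := Finset.mem_range.1 hi
      have : ContinuousAt (iteratedDeriv (j - 1 - i) w) tf :=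
        (hwd tf ⟨ha, le_rfl⟩ (j - 1 - i) (by omega)).continuousAt
      exact continuousAt_mulVec _ (continuousAt_mulVec _ this)
    exact h1.add h2
  have hXd : ∀ j, j < k → ∀ t ∈ Ioc a tf, HasDerivWithinAt (X j) (X (j + 1) t) (Ioc a tf) t := by
    intro j hj
    have hint : ∀ t ∈ Ioo a tf, HasDerivAt (X j) (X (j + 1) t) t := by
      intro t ht
      have h1 : HasDerivAt (fun y => (M ^ j).mulVec (x y))
          ((M ^ j).mulVec (M.mulVec (x t) + B.mulVec (w t))) t :=
        hasDerivAt_mulVec _ (hx t ht)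
      have h2 : HasDerivAt (fun y => ∑ i ∈ Finset.range j,
            (M ^ i).mulVec (B.mulVec (iteratedDeriv (j - 1 - i) w y)))
          (∑ i ∈ Finset.range j, (M ^ i).mulVec (B.mulVec (iteratedDeriv (j - i) w t))) t := by
        apply HasDerivAt.fun_sum
        intro i hi
        have hi' := Finset.mem_range.1 hi
        have hd := hwd t (Ioo_subset_Ioc_self ht) (j - 1 - i) (by omega)
        have h3 : j - 1 - i + 1 = j - i := by omega
        rw [h3] at hd
        exact hasDerivAt_mulVec _ (hasDerivAt_mulVec _ hd)
      have hsum := h1.add h2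
      convert hsum using 1
      iterate 4 rfl
      simp only [hX, Finset.sum_range_succ, Nat.add_sub_cancel, Nat.sub_self, iteratedDeriv_zero,
        Matrix.mulVec_add, Matrix.mulVec_mulVec, ← pow_succ]
      abel
    intro t ht
    rcases eq_or_lt_of_le ht.2 with heq | hlt
    · subst heq
      have hend : HasDerivWithinAt (X j) (X (j + 1) t) (Iic t) t := by
        apply hasDerivWithinAt_Iic_of_tendsto_deriv (s := Ioo a t)
        · intro y hy
          exact (hint y hy).differentiableAt.differentiableWithinAt
        · exact (hXcont j hj.le).continuousWithinAt
        · exact Ioo_mem_nhdsLT_of_mem ⟨ha, le_rfl⟩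
        · have h1 : Tendsto (X (j + 1)) (𝓝[<] t) (𝓝 (X (j + 1) t)) :=
            ((hXcont (j + 1) hj).tendsto).mono_left nhdsWithin_le_nhds
          refine Tendsto.congr' ?_ h1
          filter_upwards [Ioo_mem_nhdsLT_of_mem ⟨ha, le_rfl⟩] with y hy
          exact ((hint y hy).deriv).symm
      exact hend.mono Ioc_subset_Iic_self
    · exact (hint t ⟨ht.1, hlt⟩).hasDerivWithinAt
  have hud := uniqueDiffOn_Ioc a tf
  have hXp : ∀ j, j ≤ k → ∀ t ∈ Ioc a tf,
      iteratedDerivWithin j (fun t => x t p) (Ioc a tf) t = X j t p := by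
    intro j
    induction j with
    | zero =>
      intro _ t ht
      simp [hX, Matrix.one_mulVec]
    | succ j ih =>
      intro hjk t ht
      rw [iteratedDerivWithin_succ]
      have hcongr : derivWithin (iteratedDerivWithin j (fun t => x t p) (Ioc a tf)) (Ioc a tf) t
          = derivWithin (fun t => X j t p) (Ioc a tf) t :=
        derivWithin_congr (fun y hy => ih (by omega) y hy) (ih (by omega) t ht)
      rw [hcongr]
      have hD : HasDerivWithinAt (fun t => X j t p) (X (j + 1) t p) (Ioc a tf) t := by
        have := ((ContinuousLinearMap.proj (R := ℝ) (φ := fun _ : Fin n => ℝ)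
          p).hasFDerivAt).comp_hasDerivWithinAt t (hXd j (by omega) t ht)
        simpa [Function.comp_def] using this
      exact hD.derivWithin (hud t ht)
  exact hXp k le_rfl tf ⟨ha, le_rfl⟩

/-- if `x` is continuous at `t_f`, satisfies `ẋ = A x + B w` before
`t_f` and `ẋ = Ā x + B w` after `t_f`, and `w` is `k`-times continuously differentiable
near `t_f`, then the jump of the `k`-th one-sided derivative of `x_p` at `t_f` is
`Δ_{t_f}(p,k) = e_pᵀ (Ā^k - A^k) x(t_f) + e_pᵀ (Ā^{k-1} - A^{k-1}) B w(t_f)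
  + Σ_{m=0}^{k-2} e_pᵀ (Ā^m - A^m) B w^{(k-m-1)}(t_f)`. -/
theorem jump_formula {n m : ℕ}
    (A Abar : Matrix (Fin n) (Fin n) ℝ) (B : Matrix (Fin n) (Fin m) ℝ)
    (tf : ℝ) (w : ℝ → Fin m → ℝ) (x : ℝ → Fin n → ℝ)
    (k : ℕ) (hk : 1 ≤ k)
    (hw : ContDiffAt ℝ k w tf)
    (hcont : ContinuousAt x tf)
    (hpre : ∀ t < tf, HasDerivAt x (A.mulVec (x t) + B.mulVec (w t)) t)
    (hpost : ∀ t > tf, HasDerivAt x (Abar.mulVec (x t) + B.mulVec (w t)) t)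
    (p : Fin n) :
    jump x tf p k =
      ((Abar ^ k - A ^ k).mulVec (x tf)) p
        + ((Abar ^ (k - 1) - A ^ (k - 1)).mulVec (B.mulVec (w tf))) p
        + ∑ r ∈ Finset.range (k - 1),
            ((Abar ^ r - A ^ r).mulVec (B.mulVec (iteratedDeriv (k - r - 1) w tf))) p := by
  obtain ⟨v, hvo, htv, hwd⟩ := w_package hw
  obtain ⟨ε, hε, hball⟩ := Metric.isOpen_iff.1 hvo tf htv
  rw [Real.ball_eq_Ioo] at hball
  have hb : tf < tf + ε := by linarith
  have ha : tf - ε < tf := by linarith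
  have hright := side_right Abar B hb hcont
    (fun t ht => hpost t ht.1)
    (fun t ht j hj => hwd t (hball ⟨by linarith [ht.1], ht.2⟩) j hj) p
  have hleft := side_left A B ha hcont
    (fun t ht => hpre t ht.2)
    (fun t ht j hj => hwd t (hball ⟨ht.1, by linarith [ht.2]⟩) j hj) p
  have hseti : Ici tf ∩ Ioo (tf - ε) (tf + ε) = Ico tf (tf + ε) := by
    ext y
    simp only [mem_inter_iff, mem_Ici, mem_Ioo, mem_Ico]
    constructor
    · rintro ⟨h1, _, h3⟩; exact ⟨h1, h3⟩
    · rintro ⟨h1, h2⟩; exact ⟨h1, by linarith, h2⟩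
  have hsetl : Iic tf ∩ Ioo (tf - ε) (tf + ε) = Ioc (tf - ε) tf := by
    ext y
    simp only [mem_inter_iff, mem_Iic, mem_Ioo, mem_Ioc]
    constructor
    · rintro ⟨h1, h2, _⟩; exact ⟨h2, h1⟩
    · rintro ⟨h1, h2⟩; exact ⟨h2, h1, by linarith⟩
  have hmem : Ioo (tf - ε) (tf + ε) ∈ 𝓝 tf := isOpen_Ioo.mem_nhds ⟨ha, hb⟩
  have e1 : iteratedDerivWithin k (fun t => x t p) (Set.Ici tf) tf
      = iteratedDerivWithin k (fun t => x t p) (Ico tf (tf + ε)) tf := by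
    rw [← hseti, iteratedDerivWithin_inter'' hmem]
  have e2 : iteratedDerivWithin k (fun t => x t p) (Set.Iic tf) tf
      = iteratedDerivWithin k (fun t => x t p) (Ioc (tf - ε) tf) tf := by
    rw [← hsetl, iteratedDerivWithin_inter'' hmem]
  unfold jump
  rw [e1, e2, hright, hleft]
  obtain ⟨k', rfl⟩ : ∃ k', k = k' + 1 := ⟨k - 1, by omega⟩
  simp only [Pi.add_apply, Finset.sum_apply, Finset.sum_range_succ, Nat.add_sub_cancel,
    Nat.sub_self, iteratedDeriv_zero, Matrix.sub_mulVec, Pi.sub_apply,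
    show ∀ r : ℕ, k' + 1 - r - 1 = k' - r from fun r => by omega]
  rw [Finset.sum_sub_distrib]
  ring
end
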